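/- Let N, m be integers with N ≥ 2m ≥ 0 and N ≥ 1, and set K := max(⌊(2N−3m−1)/2⌋, 0). Then there exist rational numbers s_0, s_1, …, s_K such that Δ_{N,m}(X) = (2X−1) · Σ_{i=0}^{K} s_i (X(X−1))^i in ℚ[X]; moreover, if (N,m) ≠ (2,1) then one may take s_0 = 0. -/
import Mathlib


/-- `σ_i(j) = Σ_{1 ≤ n_1 < ⋯ < n_i ≤ j-1} n_1 ⋯ n_i`, with `σ_0(j) = 1`. -/
def sigmaP (i j : ℕ) : ℚ :=
  ∑ t ∈ (Finset.Icc 1 (j - 1)).powersetCard i, ∏ m ∈ t, (m : ℚ)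

/-- `Q_0(j) = 1` and `Q_k(j) = -Σ_{i=1}^{k} σ_i(j) Q_{k-i}(j)` for `k ≥ 1`. -/
def QP (j : ℕ) : ℕ → ℚ
  | 0 => 1
  | k + 1 => -∑ i : Fin (k + 1), sigmaP (i + 1) j * QP j (k - i)
  termination_by k => k
  decreasing_by omega

/-- The generalized binomial coefficient `binom(X, m) = X(X-1)⋯(X-m+1)/m!` as a
polynomial in `ℚ[X]`. -/
noncomputable def pbinom (m : ℕ) : Polynomial ℚ :=
  Polynomial.C ((m.factorial : ℚ))⁻¹ *
    ∏ i ∈ Finset.range m, (Polynomial.X - Polynomial.C (i : ℚ))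


lemma sigmaP_zero (j : ℕ) : sigmaP 0 j = 1 := by
  simp [sigmaP]

lemma sigmaP_one_eq_zero (i : ℕ) (hi : 1 ≤ i) : sigmaP i 1 = 0 := by
  cases i with
  | zero => omega
  | succ n =>
    have : Finset.powersetCard (n+1) (∅ : Finset ℕ) = ∅ := by
      rw [Finset.powersetCard_eq_empty]; simp
    simp [sigmaP, this]

lemma sigmaP_rec (n j : ℕ) (hj : 1 ≤ j) :
    sigmaP (n + 1) (j + 1) = sigmaP (n + 1) j + j * sigmaP n j := by
  have h1 : Finset.Icc 1 ((j+1) - 1) = insert j (Finset.Icc 1 (j - 1)) := by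
    ext x; simp [Finset.mem_Icc, Finset.mem_insert]; omega
  have hj' : j ∉ Finset.Icc 1 (j - 1) := by simp [Finset.mem_Icc]; omega
  have h2 : ∑ t ∈ Finset.image (insert j) (Finset.powersetCard n (Finset.Icc 1 (j - 1))),
      ∏ m ∈ t, (m:ℚ) = j * sigmaP n j := by
    rw [Finset.sum_image]
    · rw [sigmaP, Finset.mul_sum]
      apply Finset.sum_congr rfl
      intro t ht
      rw [Finset.prod_insert]
      intro hjt
      exact hj' ((Finset.mem_powersetCard.mp ht).1 hjt)
    · intro a ha b hb hab
      have haj : j ∉ a := fun h => hj' ((Finset.mem_powersetCard.mp ha).1 h)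
      have hbj : j ∉ b := fun h => hj' ((Finset.mem_powersetCard.mp hb).1 h)
      have := congrArg (fun s => Finset.erase s j) hab
      simpa [Finset.erase_insert haj, Finset.erase_insert hbj] using this
  rw [sigmaP, h1, Finset.powersetCard_succ_insert hj', Finset.sum_union, h2]
  · rfl
  · rw [Finset.disjoint_right]
    intro t ht ht'
    obtain ⟨a, ha, rfl⟩ := Finset.mem_image.mp ht
    exact hj' ((Finset.mem_powersetCard.mp ht').1 (Finset.mem_insert_self j a))

lemma QP_conv (j k : ℕ) :
    ∑ i ∈ Finset.range (k + 1), sigmaP i j * QP j (k - i) =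
      if k = 0 then 1 else 0 := by
  cases k with
  | zero => simp [sigmaP_zero, QP]
  | succ k =>
    rw [Finset.sum_range_succ']
    simp only [sigmaP_zero, one_mul, Nat.sub_zero]
    rw [QP]
    rw [Fin.sum_univ_eq_sum_range (fun i => sigmaP (i + 1) j * QP j (k - i))]
    have : ∀ i ∈ Finset.range (k+1), sigmaP (i+1) j * QP j (k + 1 - (i+1)) =
        sigmaP (i+1) j * QP j (k - i) := by
      intro i hi; rw [Nat.succ_sub_succ]
    rw [Finset.sum_congr rfl this]
    simp

lemma QP_unique (j : ℕ) (B : ℕ → ℚ)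
    (hB : ∀ k, ∑ i ∈ Finset.range (k + 1), sigmaP i j * B (k - i) =
      if k = 0 then 1 else 0) : ∀ k, B k = QP j k := by
  intro k
  induction k using Nat.strong_induction_on with
  | _ k ih =>
    have h1 := hB k
    have h2 := QP_conv j k
    rw [Finset.sum_range_succ'] at h1 h2
    simp only [sigmaP_zero, one_mul, Nat.sub_zero] at h1 h2
    have : ∑ i ∈ Finset.range k, sigmaP (i + 1) j * B (k - (i + 1)) =
        ∑ i ∈ Finset.range k, sigmaP (i + 1) j * QP j (k - (i + 1)) := by
      apply Finset.sum_congr rfl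
      intro i hi
      rw [ih (k - (i+1)) (by simp at hi; omega)]
    rw [this] at h1
    linarith

lemma QP_shift (j : ℕ) (hj : 1 ≤ j) (k : ℕ) :
    QP j k = QP (j+1) k + j * (if k = 0 then 0 else QP (j+1) (k-1)) := by
  refine (QP_unique j
    (fun k => QP (j+1) k + j * (if k = 0 then 0 else QP (j+1) (k-1))) ?_ k).symm
  intro k
  rw [← QP_conv (j+1) k]
  cases k with
  | zero => simp [sigmaP_zero]
  | succ k' =>
    simp only [mul_add, Finset.sum_add_distrib]
    have h2 : ∑ i ∈ Finset.range (k'+2),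
        sigmaP i j * (j * (if k'+1-i = 0 then 0 else QP (j+1) (k'+1-i-1))) =
        ∑ i ∈ Finset.range (k'+1), (j * sigmaP i j) * QP (j+1) (k'-i) := by
      rw [Finset.sum_range_succ]
      norm_num
      apply Finset.sum_congr rfl
      intro i hi
      simp only [Finset.mem_range] at hi
      rw [if_neg (by omega)]
      have : k'+1-i-1 = k'-i := by omega
      rw [this]; ring
    have h1 : ∑ i ∈ Finset.range (k'+2), sigmaP i j * QP (j+1) (k'+1-i) =
        (∑ i ∈ Finset.range (k'+1), sigmaP (i+1) j * QP (j+1) (k'-i)) + QP (j+1) (k'+1) := by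
      rw [Finset.sum_range_succ']
      simp only [sigmaP_zero, one_mul, Nat.sub_zero, Nat.succ_sub_succ]
    have hR : ∑ i ∈ Finset.range (k'+2), sigmaP i (j+1) * QP (j+1) (k'+1-i) =
        (∑ i ∈ Finset.range (k'+1), sigmaP (i+1) (j+1) * QP (j+1) (k'-i)) + QP (j+1) (k'+1) := by
      rw [Finset.sum_range_succ']
      simp only [sigmaP_zero, one_mul, Nat.sub_zero, Nat.succ_sub_succ]
    rw [h1, h2, hR]
    rw [add_right_comm, ← Finset.sum_add_distrib]
    congr 1
    apply Finset.sum_congr rfl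
    intro i hi
    rw [sigmaP_rec i j hj]
    ring

lemma QP_one_eq_zero (k : ℕ) (hk : 1 ≤ k) : QP 1 k = 0 := by
  cases k with
  | zero => omega
  | succ k =>
    rw [QP]
    have : ∀ i : Fin (k+1), sigmaP (i+1) 1 * QP 1 (k - i) = 0 := by
      intro i; rw [sigmaP_one_eq_zero _ (by omega)]; ring
    simp [this]

open Polynomial

lemma polyext (f g : ℚ[X]) (h : ∀ j : ℕ, 1 ≤ j → f.eval (j:ℚ) = g.eval (j:ℚ)) : f = g := by
  rw [← sub_eq_zero]
  apply Polynomial.eq_zero_of_infinite_isRoot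
  apply Set.infinite_of_injective_forall_mem
    (f := fun n : ℕ => ((n + 1 : ℕ) : ℚ))
  · intro a b hab
    have : ((a+1:ℕ):ℚ) = ((b+1:ℕ):ℚ) := hab
    exact_mod_cast Nat.add_right_cancel (Nat.cast_injective this)
  · intro n
    simp only [Set.mem_setOf_eq, IsRoot, eval_sub]
    rw [h (n+1) (by omega)]
    ring

lemma const_of_shift (f : ℚ[X]) (h : f.comp (X + 1) = f) : f = C (f.eval 1) := by
  apply polyext
  intro j hj
  rw [eval_C]
  induction j with
  | zero => omega
  | succ j ih =>
    rcases Nat.eq_or_lt_of_le hj with h1 | h1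
    · rw [← h1]; norm_num
    · have hj' : 1 ≤ j := by omega
      rw [← ih hj']
      have := congrArg (fun q => Polynomial.eval (j:ℚ) q) h
      simp only [eval_comp, eval_add, eval_X, eval_one] at this
      rw [← this]
      norm_num

section Dual
variable (p r : ℕ → Polynomial ℚ)
    (hpdeg : ∀ n : ℕ, (p n).natDegree ≤ 2 * n)
    (hpval : ∀ n : ℕ, ∀ j : ℕ, 1 ≤ j → (p n).eval (j : ℚ) = sigmaP n j)
    (hrdeg : ∀ n : ℕ, (r n).natDegree ≤ 2 * n)
    (hrval : ∀ n : ℕ, ∀ j : ℕ, 1 ≤ j → (r n).eval (j : ℚ) = QP j n)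

include hpdeg hpval in
lemma p_zero : p 0 = 1 := by
  have h0 := Polynomial.eq_C_of_natDegree_le_zero (by simpa using hpdeg 0)
  have h1 := hpval 0 1 le_rfl
  rw [sigmaP_zero] at h1
  rw [h0, eval_C] at h1
  rw [h0, h1, map_one]

include hrdeg hrval in
lemma r_zero : r 0 = 1 := by
  have h0 := Polynomial.eq_C_of_natDegree_le_zero (by simpa using hrdeg 0)
  have h1 := hrval 0 1 le_rfl
  rw [QP] at h1
  rw [h0, eval_C] at h1
  rw [h0, h1, map_one]

include hpval in
lemma p_rec (n : ℕ) : (p (n+1)).comp (X + 1) = p (n+1) + X * p n := by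
  apply polyext
  intro j hj
  simp only [eval_comp, eval_add, eval_mul, eval_X, eval_one]
  have hc : (j:ℚ) + 1 = ((j+1:ℕ):ℚ) := by push_cast; ring
  rw [hc, hpval (n+1) (j+1) (by omega), hpval (n+1) j hj, hpval n j hj,
    sigmaP_rec n j hj]

include hrval in
lemma r_rec (n : ℕ) :
    r (n+1) = (r (n+1)).comp (X + 1) + X * ((r n).comp (X + 1)) := by
  apply polyext
  intro j hj
  simp only [eval_add, eval_mul, eval_comp, eval_X, eval_one]
  have hc : (j:ℚ) + 1 = ((j+1:ℕ):ℚ) := by push_cast; ring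
  rw [hc, hrval (n+1) j hj, hrval (n+1) (j+1) (by omega), hrval n (j+1) (by omega)]
  have := QP_shift j hj (n+1)
  simpa using this

include hpdeg hpval hrdeg hrval in
lemma dual : ∀ n : ℕ, r n = (-1)^n * (p n).comp (1 - X) := by
  intro n
  induction n with
  | zero =>
    rw [r_zero r hrdeg hrval, p_zero p hpdeg hpval]
    norm_num
  | succ n ih =>
    have hcomp1 : ((1 : ℚ[X]) - X).comp (X + 1) = -X := by
      simp [sub_comp]
    have hcomp2 : ((X : ℚ[X]) + 1).comp (-X) = 1 - X := by
      simp [add_comp]; ring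
    -- h1 : p (n+1) composed with -X
    have h1 : (p (n+1)).comp (-X) = (p (n+1)).comp (1 - X) + X * (p n).comp (-X) := by
      have := congrArg (fun q => q.comp (-X)) (p_rec p hpval n)
      simp only [add_comp, mul_comp, X_comp] at this
      rw [Polynomial.comp_assoc, hcomp2] at this
      rw [this]; ring
    -- h2 : (p n).comp (-X) via ih
    have hsign : ((-1:ℚ[X]))^n * (-1)^n = 1 := by
      rw [← pow_add]; exact Even.neg_one_pow ⟨n, by ring⟩
    have h2 : (p n).comp (-X) = (-1)^n * (r n).comp (X + 1) := by
      have hpn : (p n).comp (1 - X) = (-1)^n * r n := by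
        rw [ih]; rw [← mul_assoc, hsign, one_mul]
      have := congrArg (fun q => q.comp (X + 1)) hpn
      simp only [mul_comp, neg_comp, one_comp, pow_comp] at this
      rw [Polynomial.comp_assoc, hcomp1] at this
      exact this
    have h3 := r_rec r hrval n
    -- show D.comp (X+1) = D where D is the difference
    set D : ℚ[X] := r (n+1) - (-1)^(n+1) * (p (n+1)).comp (1 - X) with hD
    have hshift : D.comp (X + 1) = D := by
      rw [hD, sub_comp, mul_comp, pow_comp, neg_comp, one_comp,
        Polynomial.comp_assoc, hcomp1]
      linear_combination (-h3) - (-1:ℚ[X])^(n+1) * h1 -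
        ((-1:ℚ[X])^(n+1) * X) * h2 + X * ((r n).comp (X+1)) * hsign
    have hconst := const_of_shift D hshift
    have heval : D.eval 1 = 0 := by
      rw [hD]
      simp only [eval_sub, eval_mul, eval_comp, eval_sub, eval_one, eval_X, eval_pow, eval_neg]
      have e1 : (r (n+1)).eval 1 = 0 := by
        have := hrval (n+1) 1 le_rfl
        norm_num at this
        rw [this]; exact QP_one_eq_zero (n+1) (by omega)
      have e2 : (p (n+1)).eval 0 = 0 := by
        have := congrArg (fun q => Polynomial.eval (0:ℚ) q) (p_rec p hpval n)
        simp only [eval_comp, eval_add, eval_mul, eval_X, eval_one, zero_add, zero_mul,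
          add_zero] at this
        have h4 := hpval (n+1) 1 le_rfl
        norm_num at h4
        rw [← this, h4]
        exact sigmaP_one_eq_zero (n+1) (by omega)
      rw [e1]
      norm_num [e2]
    rw [heval, map_zero] at hconst
    have : D = 0 := hconst
    rw [hD] at this
    exact sub_eq_zero.mp this
end Dual

lemma u_comp : ((X : ℚ[X]) * (X - 1)).comp (1 - X) = X * (X - 1) := by
  simp [mul_comp, sub_comp]
  ring

lemma u_monic : ((X : ℚ[X]) * (X - 1)).Monic := by
  have : ((X : ℚ[X]) - 1) = X - C 1 := by simp
  exact monic_X.mul (this ▸ monic_X_sub_C 1)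

lemma u_natDegree : ((X : ℚ[X]) * (X - 1)).natDegree = 2 := by
  have : ((X : ℚ[X]) - 1) = X - C 1 := by simp
  rw [this, natDegree_mul (X_ne_zero) (X_sub_C_ne_zero 1), natDegree_X, natDegree_X_sub_C]

lemma oneSubX_natDegree : ((1 : ℚ[X]) - X).natDegree = 1 := by
  have : ((1:ℚ[X]) - X) = -(X - C 1) := by simp
  rw [this, natDegree_neg, natDegree_X_sub_C]

lemma oneSubX_leadingCoeff : ((1 : ℚ[X]) - X).leadingCoeff = -1 := by
  have : ((1:ℚ[X]) - X) = -(X - C 1) := by simp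
  rw [this, leadingCoeff_neg, leadingCoeff_X_sub_C]

lemma symEven (g : ℚ[X]) (hg : g.comp (1 - X) = g) (hg0 : g ≠ 0) :
    Even g.natDegree := by
  by_contra hodd
  rw [Nat.not_even_iff_odd] at hodd
  have hlc := Polynomial.leadingCoeff_comp (p := g) (q := 1 - X)
    (by rw [oneSubX_natDegree]; omega)
  rw [hg, oneSubX_leadingCoeff, hodd.neg_one_pow] at hlc
  have : g.leadingCoeff = 0 := by linarith [hlc]
  exact hg0 (leadingCoeff_eq_zero.mp this)

lemma symRep : ∀ d : ℕ, ∀ g : ℚ[X], g.natDegree ≤ d → g.comp (1 - X) = g →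
    ∀ K : ℕ, g.natDegree ≤ 2 * K →
    ∃ s : ℕ → ℚ, g = ∑ i ∈ Finset.range (K + 1),
      C (s i) * ((X : ℚ[X]) * (X - 1)) ^ i := by
  intro d
  induction d using Nat.strong_induction_on with
  | _ d ih =>
    intro g hgd hsym K hK
    rcases eq_or_ne g 0 with rfl | hg0
    · exact ⟨0, by simp⟩
    have hEven := symEven g hsym hg0
    obtain ⟨e, he⟩ := hEven
    have hde : g.natDegree = 2 * e := by omega
    set u : ℚ[X] := X * (X - 1) with hu
    have hue : (u ^ e).natDegree = 2 * e := by
      rw [Monic.natDegree_pow u_monic, u_natDegree]; ring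
    have huem : (u ^ e).Monic := u_monic.pow e
    set a : ℚ := g.coeff (2 * e) with ha
    set g' : ℚ[X] := g - C a * u ^ e with hg'
    have hdeg' : g'.natDegree ≤ 2 * e := by
      apply le_trans (natDegree_sub_le _ _)
      apply max_le (by omega)
      apply le_trans (natDegree_mul_le)
      simp [hue]
    have hcoeff' : g'.coeff (2 * e) = 0 := by
      rw [hg']
      have : (u ^ e).coeff (2 * e) = 1 := by
        have := huem.leadingCoeff
        rwa [Polynomial.leadingCoeff, hue] at this
      simp [this, coeff_C_mul, ha]
    have he_le : e ≤ K := by omega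
    have hsym' : g'.comp (1 - X) = g' := by
      rw [hg', sub_comp, mul_comp, C_comp, pow_comp, hu, u_comp, hsym]
    rcases eq_or_ne g' 0 with hz | hz
    · -- g = C a * u^e
      refine ⟨fun i => if i = e then a else 0, ?_⟩
      have hgeq : g = C a * u ^ e := sub_eq_zero.mp hz
      rw [hgeq]
      rw [Finset.sum_eq_single e]
      · simp
      · intro b hb hbe
        simp [hbe]
      · intro h
        exact absurd (Finset.mem_range.mpr (by omega)) h
    · have hlt : g'.natDegree < g.natDegree := by
        rcases Nat.lt_or_ge g'.natDegree (2*e) with h | h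
        · omega
        · exfalso
          have : g'.natDegree = 2*e := le_antisymm hdeg' h
          have := hz (leadingCoeff_eq_zero.mp (by rwa [Polynomial.leadingCoeff, this]))
          exact this
      obtain ⟨s', hs'⟩ := ih g'.natDegree (by omega) g' le_rfl hsym' K (by omega)
      refine ⟨fun i => if i = e then s' e + a else s' i, ?_⟩
      have hmem : e ∈ Finset.range (K + 1) := Finset.mem_range.mpr (by omega)
      have hterm : ∀ i ∈ Finset.range (K + 1),
          C (if i = e then s' e + a else s' i) * u ^ i =
            C (s' i) * u ^ i + (if i = e then C a * u ^ e else 0) := by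
        intro i hi
        by_cases hie : i = e
        · subst hie; simp [map_add]; ring
        · simp [hie]
      rw [Finset.sum_congr rfl hterm, Finset.sum_add_distrib,
        Finset.sum_ite_eq' (Finset.range (K+1)) e (fun _ => C a * u ^ e),
        if_pos hmem, ← hs']
      rw [hg']
      ring



theorem stmt11 (p r : ℕ → Polynomial ℚ)
    (hpdeg : ∀ n : ℕ, (p n).natDegree ≤ 2 * n)
    (hpval : ∀ n : ℕ, ∀ j : ℕ, 1 ≤ j → (p n).eval (j : ℚ) = sigmaP n j)
    (hrdeg : ∀ n : ℕ, (r n).natDegree ≤ 2 * n)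
    (hrval : ∀ n : ℕ, ∀ j : ℕ, 1 ≤ j → (r n).eval (j : ℚ) = QP j n)
    (N m : ℕ) (hNm : 2 * m ≤ N) (hN : 1 ≤ N) :
    ∃ s : ℕ → ℚ,
      pbinom m * r (N - 2 * m) -
          (-1) ^ N * (pbinom m).comp (1 - Polynomial.X) * p (N - 2 * m) =
        (2 * Polynomial.X - 1) *
          ∑ i ∈ Finset.range ((((2 * N : ℤ) - 3 * m - 1) / 2).toNat + 1),
            Polynomial.C (s i) * (Polynomial.X * (Polynomial.X - 1)) ^ i ∧
      ((N, m) ≠ (2, 1) → s 0 = 0) := by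
  set n := N - 2 * m with hn
  set K := (((2 * N : ℤ) - 3 * m - 1) / 2).toNat with hK
  set Δ : ℚ[X] := pbinom m * r n - (-1) ^ N * (pbinom m).comp (1 - X) * p n with hΔdef
  clear_value Δ
  have hdual := dual p r hpdeg hpval hrdeg hrval n
  have hzz : ((-1 : ℚ[X])) ^ n * (-1) ^ n = 1 := by
    rw [← pow_add]; exact Even.neg_one_pow ⟨n, by ring⟩
  have hsgn : ((-1 : ℚ[X])) ^ N = (-1) ^ n := by
    have : N = n + 2 * m := by omega
    rw [this, pow_add, pow_mul]
    norm_num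
  have hι : ((1 : ℚ[X]) - X).comp (1 - X) = X := by
    simp [sub_comp]
  have hBB : ((pbinom m).comp (1 - X)).comp (1 - X) = pbinom m := by
    rw [Polynomial.comp_assoc, hι, comp_X]
  have hrc : (r n).comp (1 - X) = (-1) ^ n * p n := by
    rw [hdual]
    simp only [mul_comp, pow_comp, neg_comp, one_comp]
    rw [Polynomial.comp_assoc, hι, comp_X]
  have hpc : (p n).comp (1 - X) = (-1) ^ n * r n := by
    rw [hdual, ← mul_assoc, hzz, one_mul]
  have hΔsym : Δ.comp (1 - X) = -Δ := by
    rw [hΔdef, sub_comp, mul_comp, mul_comp, mul_comp, pow_comp, neg_comp, one_comp,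
      hBB, hrc, hpc, hsgn]
    linear_combination (-(pbinom m * r n)) * hzz
  -- degree bound
  have hB : (pbinom m).natDegree ≤ m := by
    rw [pbinom]
    apply le_trans natDegree_mul_le
    rw [natDegree_C, zero_add]
    apply le_trans (natDegree_prod_le _ _)
    apply le_trans (Finset.sum_le_card_nsmul _ _ 1 ?_)
    · simp
    · intro i hi
      exact le_of_eq (natDegree_X_sub_C _)
  have hBι : ((pbinom m).comp (1 - X)).natDegree ≤ m := by
    apply le_trans natDegree_comp_le
    rw [oneSubX_natDegree, mul_one]
    exact hB
  have hc0 : ((-1 : ℚ[X]) ^ N).natDegree = 0 := by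
    rw [hsgn]
    apply Nat.le_zero.mp
    apply le_trans (natDegree_pow_le)
    simp [natDegree_neg]
  have hdegΔ : Δ.natDegree ≤ m + 2 * n := by
    rw [hΔdef]
    apply le_trans (natDegree_sub_le _ _)
    apply max_le
    · exact le_trans natDegree_mul_le (add_le_add hB (hrdeg n))
    · apply le_trans natDegree_mul_le
      apply add_le_add _ (hpdeg n)
      apply le_trans natDegree_mul_le
      rw [hc0, zero_add]
      exact hBι
  rcases eq_or_ne Δ 0 with hΔ0 | hΔ0
  · refine ⟨0, ?_, fun _ => rfl⟩
    rw [hΔ0]  -- goal uses Δ via set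
    simp
  · -- factor out (2X - 1)
    have hroot : Δ.eval (1/2 : ℚ) = 0 := by
      have := congrArg (fun q => Polynomial.eval (1/2 : ℚ) q) hΔsym
      simp only [eval_comp, eval_sub, eval_one, eval_X, eval_neg] at this
      norm_num at this
      linarith
    obtain ⟨q, hq⟩ := (dvd_iff_isRoot.mpr hroot)
    set g : ℚ[X] := C (1/2 : ℚ) * q with hgdef
    have hC2 : (2 : ℚ[X]) * C (1/2 : ℚ) = 1 := by
      rw [show (2 : ℚ[X]) = C (2 : ℚ) from (map_ofNat C 2).symm]
      rw [← C_mul]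
      norm_num
    have hfac : Δ = (2 * X - 1) * g := by
      rw [hq, hgdef]
      linear_combination (-(X * q)) * hC2
    have hA : ((2 * X - 1 : ℚ[X])).comp (1 - X) = -(2 * X - 1) := by
      simp [sub_comp, mul_comp]; ring
    have hA0 : (2 * X - 1 : ℚ[X]) ≠ 0 := by
      intro h
      have := congrArg (fun q => Polynomial.eval (0:ℚ) q) h
      simp at this
    have hg0 : g ≠ 0 := by
      intro h; apply hΔ0; rw [hfac, h, mul_zero]
    have hgsym : g.comp (1 - X) = g := by
      have h1 : (2*X-1 : ℚ[X]) * (g.comp (1 - X)) = (2*X-1) * g := by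
        have h2 := hΔsym
        rw [hfac, mul_comp, hA] at h2
        linear_combination -h2
      exact mul_left_cancel₀ hA0 h1
    have hAdeg : (2 * X - 1 : ℚ[X]).natDegree = 1 := by
      have h3 : (2*X-1 : ℚ[X]) = C 2 * X + C (-1) := by
        rw [map_neg, map_one, (map_ofNat C 2 : C (2:ℚ) = 2)]; ring
      rw [h3, natDegree_linear (by norm_num)]
    have hdegfac : Δ.natDegree = 1 + g.natDegree := by
      rw [hfac, natDegree_mul hA0 hg0, hAdeg]
    obtain ⟨e, he⟩ := symEven g hgsym hg0
    have hKg : g.natDegree ≤ 2 * K := by omega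
    obtain ⟨s, hs⟩ := symRep g.natDegree g le_rfl hgsym K hKg
    refine ⟨s, ?_, ?_⟩
    · rw [hfac, hs]
    · intro hne
      have hs0 : Polynomial.eval (1:ℚ) Δ = s 0 := by
        rw [hfac, hs, eval_mul, eval_finset_sum]
        have h4 : ∀ i ∈ Finset.range (K+1),
            Polynomial.eval (1:ℚ) (C (s i) * (X * (X-1))^i) =
              if i = 0 then s 0 else 0 := by
          intro i hi
          simp only [eval_mul, eval_pow, eval_C, eval_X, eval_sub, eval_one]
          by_cases h : i = 0
          · subst h; norm_num
          · rw [if_neg h, show (1:ℚ) * (1-1) = 0 by ring, zero_pow h, mul_zero]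
        rw [Finset.sum_congr rfl h4,
          Finset.sum_ite_eq' (Finset.range (K+1)) 0 (fun _ => s 0),
          if_pos (Finset.mem_range.mpr (by omega))]
        norm_num
      have hΔ1 : Polynomial.eval (1:ℚ) Δ = 0 := by
        rw [hΔdef]
        simp only [eval_sub, eval_mul, eval_comp, eval_pow, eval_neg, eval_one, eval_X]
        have hr1 : (r n).eval (1:ℚ) = QP 1 n := by
          have := hrval n 1 le_rfl; norm_num at this; exact this
        have hp1 : (p n).eval (1:ℚ) = sigmaP n 1 := by
          have := hpval n 1 le_rfl; norm_num at this; exact this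
        have harg : (1:ℚ) - 1 = 0 := by norm_num
        rw [harg, hr1, hp1]
        by_cases hn0 : n = 0
        · have hm2 : 2 ≤ m := by
            rcases Nat.lt_or_ge m 2 with h | h
            · exfalso
              have hm1 : m = 1 := by omega
              exact hne (by rw [Prod.mk.injEq]; omega)
            · exact h
          have hb1 : (pbinom m).eval (1:ℚ) = 0 := by
            rw [pbinom, eval_mul, eval_prod]
            apply mul_eq_zero_of_right
            apply Finset.prod_eq_zero (Finset.mem_range.mpr (show 1 < m by omega))
            norm_num
          have hb0 : (pbinom m).eval (0:ℚ) = 0 := by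
            rw [pbinom, eval_mul, eval_prod]
            apply mul_eq_zero_of_right
            apply Finset.prod_eq_zero (Finset.mem_range.mpr (show 0 < m by omega))
            norm_num
          rw [hb1, hb0]
          ring
        · rw [QP_one_eq_zero n (by omega), sigmaP_one_eq_zero n (by omega)]
          ring
      rw [← hs0, hΔ1]
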